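/- If σ ∈ S_{n-1} and π is obtained from σ by appending n at the end (π = σn), then stat(π) = stat(σ) + des(σ). -/

import Mathlib

namespace BS

/-- `l` is (the one-line notation of) a permutation of `{1,...,n}`. -/
def isPerm (l : List ℕ) (n : ℕ) : Prop := l.Perm ((List.range n).map (· + 1))

/-- number of inversions -/
def inv (l : List ℕ) : ℕ :=
  ((Finset.range l.length ×ˢ Finset.range l.length).filter
    (fun p => p.1 < p.2 ∧ l.getD p.2 0 < l.getD p.1 0)).card

/-- the set of (0-indexed) descent positions -/
def desSet (l : List ℕ) : Finset ℕ :=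
  (Finset.range (l.length - 1)).filter (fun i => l.getD (i + 1) 0 < l.getD i 0)

def des (l : List ℕ) : ℕ := (desSet l).card

/-- major index: sum of the (1-indexed) descent positions -/
def maj (l : List ℕ) : ℕ := ∑ i ∈ desSet l, (i + 1)

/-- number of occurrences of the generalized pattern ac-b (132, first two letters adjacent) -/
def acb (l : List ℕ) : ℕ :=
  ((Finset.range l.length ×ˢ Finset.range l.length).filter
    (fun p => p.1 + 2 ≤ p.2 ∧ l.getD p.1 0 < l.getD p.2 0 ∧ l.getD p.2 0 < l.getD (p.1 + 1) 0)).card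

/-- number of occurrences of the generalized pattern ba-c (213, first two letters adjacent) -/
def bac (l : List ℕ) : ℕ :=
  ((Finset.range l.length ×ˢ Finset.range l.length).filter
    (fun p => p.1 + 2 ≤ p.2 ∧ l.getD (p.1 + 1) 0 < l.getD p.1 0 ∧ l.getD p.1 0 < l.getD p.2 0)).card

/-- number of occurrences of the generalized pattern cb-a (321, first two letters adjacent) -/
def cba (l : List ℕ) : ℕ :=
  ((Finset.range l.length ×ˢ Finset.range l.length).filter
    (fun p => p.1 + 2 ≤ p.2 ∧ l.getD p.2 0 < l.getD (p.1 + 1) 0 ∧ l.getD (p.1 + 1) 0 < l.getD p.1 0)).card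

/-- Babson–Steingrímsson's statistic stat = (ac-b)+(ba-c)+(cb-a)+(ba) -/
def stat (l : List ℕ) : ℕ := acb l + bac l + cba l + des l

/-- first letter -/
def F (l : List ℕ) : ℕ := l.headD 0

/-- insertion space `j` (i.e. between letters `j-1` and `j`, 0-indexed) is a descent space -/
def isDescSpace (σ : List ℕ) (j : ℕ) : Prop :=
  1 ≤ j ∧ j < σ.length ∧ σ.getD j 0 < σ.getD (j - 1) 0

instance (σ : List ℕ) (j : ℕ) : Decidable (isDescSpace σ j) := by
  unfold isDescSpace; infer_instance

def isAscSpace (σ : List ℕ) (j : ℕ) : Prop :=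
  1 ≤ j ∧ j < σ.length ∧ σ.getD (j - 1) 0 < σ.getD j 0

instance (σ : List ℕ) (j : ℕ) : Decidable (isAscSpace σ j) := by
  unfold isAscSpace; infer_instance

/-- maj-labeling of the insertion spaces `0,...,σ.length`: the final space gets `0`,
descent spaces get `1,...,des σ` from right to left, the remaining spaces get
`des σ + 1, ...` from left to right. -/
def majLabel (σ : List ℕ) (j : ℕ) : ℕ :=
  if j = σ.length then 0
  else if isDescSpace σ j then
    1 + ((Finset.Ico (j + 1) σ.length).filter (fun t => isDescSpace σ t)).card
  else des σ + 1 + ((Finset.range j).filter (fun t => ¬ isDescSpace σ t)).card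

/-- stat-labeling of the insertion spaces: descent spaces and the final space get
`0,...,des σ` from left to right, the initial space gets `des σ + 1`, and ascent
spaces get `des σ + 2, ...` from right to left. -/
def statLabel (σ : List ℕ) (j : ℕ) : ℕ :=
  if j = σ.length then des σ
  else if isDescSpace σ j then ((Finset.range j).filter (fun t => isDescSpace σ t)).card
  else if j = 0 then des σ + 1
  else des σ + 1 + ((Finset.Ico j σ.length).filter (fun t => isAscSpace σ t)).card

/-- index of the insertion space carrying label `i` in the labeling `lab` -/
def spaceOfLabel (lab : List ℕ → ℕ → ℕ) (σ : List ℕ) (i : ℕ) : ℕ :=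
  ((List.range (σ.length + 1)).find? (fun j => decide (lab σ j = i))).getD 0

/-- insert `v` at the space with inv-label `i` (spaces labeled from right to left) -/
def insertAtInvLabel (i : ℕ) (σ : List ℕ) (v : ℕ) : List ℕ :=
  σ.insertIdx (σ.length - i) v

def insertAtMajLabel (i : ℕ) (σ : List ℕ) (v : ℕ) : List ℕ :=
  σ.insertIdx (spaceOfLabel majLabel σ i) v

def insertAtStatLabel (i : ℕ) (σ : List ℕ) (v : ℕ) : List ℕ :=
  σ.insertIdx (spaceOfLabel statLabel σ i) v

/-- inversion table: `c_i` is the inv-label of the space of `π⁽ⁱ⁻¹⁾` that letter `i` occupies -/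
def invTable (π : List ℕ) : List ℕ :=
  (List.range π.length).map (fun k =>
    if k = 0 then 0
    else (π.filter (· ≤ k)).length - (π.filter (· ≤ k + 1)).idxOf (k + 1))

/-- major index table -/
def majTable (π : List ℕ) : List ℕ :=
  (List.range π.length).map (fun k =>
    if k = 0 then 0
    else majLabel (π.filter (· ≤ k)) ((π.filter (· ≤ k + 1)).idxOf (k + 1)))

/-- stat table -/
def statTable (π : List ℕ) : List ℕ :=
  (List.range π.length).map (fun k =>
    if k = 0 then 0
    else statLabel (π.filter (· ≤ k)) ((π.filter (· ≤ k + 1)).idxOf (k + 1)))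

/-- `w ∈ E_n`, i.e. `w = w₁⋯wₙ` with `0 ≤ wᵢ ≤ i - 1` -/
def memE (w : List ℕ) (n : ℕ) : Prop :=
  w.length = n ∧ ∀ k < n, w.getD k 0 ≤ k

/-- the map ρ : complement-reverse `π⁽ᵏ⁾` (k the first letter) behind its first letter,
then reinsert `k+1,…,n` at the maj-labels given by the stat table of `π`. -/
def rho (π : List ℕ) : List ℕ :=
  let n := π.length
  let k := π.headD 0
  let s := statTable π
  (List.range (n - k)).foldl
    (fun σ m => insertAtMajLabel (s.getD (k + m) 0) σ (k + m + 1))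
    (k :: (((π.filter (· ≤ k)).tail.map (fun x => k - x)).reverse))

/-- the finset of one-line notations of permutations of `{1,…,n}` -/
def perms (n : ℕ) : Finset (List ℕ) :=
  (((List.range n).map (· + 1)).permutations).toFinset

/-- the q-factorial `[n]_q!` -/
def qFact {R : Type*} [CommSemiring R] (q : R) (n : ℕ) : R :=
  ∏ k ∈ Finset.range n, ∑ j ∈ Finset.range (k + 1), q ^ j

end BS
/-- appending `n` at the end adds des(σ) to stat. -/


lemma BS.getD_lt_of_forall (σ : List ℕ) (x : ℕ) (hx : ∀ a ∈ σ, a < x) {i : ℕ}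
    (hi : i < σ.length) : σ.getD i 0 < x := by
  rw [List.getD_eq_getElem σ 0 hi]
  exact hx _ (List.getElem_mem hi)

lemma BS.getD_append_lt (σ : List ℕ) (x : ℕ) {i : ℕ} (hi : i < σ.length) :
    (σ ++ [x]).getD i 0 = σ.getD i 0 := List.getD_append _ _ _ _ hi

lemma BS.getD_append_last (σ : List ℕ) (x : ℕ) :
    (σ ++ [x]).getD σ.length 0 = x := by
  rw [List.getD_append_right _ _ _ _ le_rfl, Nat.sub_self]
  rfl

lemma BS.desSet_append_max (σ : List ℕ) (x : ℕ) (hx : ∀ a ∈ σ, a < x) :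
    BS.desSet (σ ++ [x]) = BS.desSet σ := by
  ext i
  simp only [BS.desSet, Finset.mem_filter, Finset.mem_range, List.length_append,
    List.length_singleton, Nat.add_sub_cancel]
  constructor
  · rintro ⟨hi, hc⟩
    by_cases h1 : i + 1 < σ.length
    · rw [BS.getD_append_lt σ x h1, BS.getD_append_lt σ x (by omega)] at hc
      exact ⟨by omega, hc⟩
    · have he : i + 1 = σ.length := by omega
      rw [he, BS.getD_append_last, BS.getD_append_lt σ x (by omega)] at hc
      exact absurd hc (not_lt.2 (BS.getD_lt_of_forall σ x hx (by omega)).le)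
  · rintro ⟨hi, hc⟩
    rw [BS.getD_append_lt σ x (by omega), BS.getD_append_lt σ x (by omega)]
    exact ⟨by omega, hc⟩

lemma BS.acb_append_max (σ : List ℕ) (x : ℕ) (hx : ∀ a ∈ σ, a < x) :
    BS.acb (σ ++ [x]) = BS.acb σ := by
  unfold BS.acb
  congr 1
  ext p
  simp only [Finset.mem_filter, Finset.mem_product, Finset.mem_range, List.length_append,
    List.length_singleton]
  constructor
  · rintro ⟨⟨h1, h2⟩, h3, h4, h5⟩
    by_cases hL : p.2 < σ.length
    · rw [BS.getD_append_lt σ x hL, BS.getD_append_lt σ x (show p.1 < σ.length by omega)] at h4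
      rw [BS.getD_append_lt σ x hL,
        BS.getD_append_lt σ x (show p.1 + 1 < σ.length by omega)] at h5
      exact ⟨⟨by omega, hL⟩, h3, h4, h5⟩
    · have he : p.2 = σ.length := by omega
      rw [he, BS.getD_append_last,
        BS.getD_append_lt σ x (show p.1 + 1 < σ.length by omega)] at h5
      exact absurd h5 (not_lt.2 (BS.getD_lt_of_forall σ x hx (by omega)).le)
  · rintro ⟨⟨h1, h2⟩, h3, h4, h5⟩
    rw [BS.getD_append_lt σ x (show p.1 < σ.length by omega),
      BS.getD_append_lt σ x (show p.2 < σ.length by omega),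
      BS.getD_append_lt σ x (show p.1 + 1 < σ.length by omega)]
    exact ⟨⟨by omega, by omega⟩, h3, h4, h5⟩

lemma BS.cba_append_max (σ : List ℕ) (x : ℕ) (hx : ∀ a ∈ σ, a < x) :
    BS.cba (σ ++ [x]) = BS.cba σ := by
  unfold BS.cba
  congr 1
  ext p
  simp only [Finset.mem_filter, Finset.mem_product, Finset.mem_range, List.length_append,
    List.length_singleton]
  constructor
  · rintro ⟨⟨h1, h2⟩, h3, h4, h5⟩
    by_cases hL : p.2 < σ.length
    · rw [BS.getD_append_lt σ x hL,
        BS.getD_append_lt σ x (show p.1 + 1 < σ.length by omega)] at h4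
      rw [BS.getD_append_lt σ x (show p.1 + 1 < σ.length by omega),
        BS.getD_append_lt σ x (show p.1 < σ.length by omega)] at h5
      exact ⟨⟨by omega, hL⟩, h3, h4, h5⟩
    · have he : p.2 = σ.length := by omega
      rw [he, BS.getD_append_last,
        BS.getD_append_lt σ x (show p.1 + 1 < σ.length by omega)] at h4
      exact absurd h4 (not_lt.2 (BS.getD_lt_of_forall σ x hx (by omega)).le)
  · rintro ⟨⟨h1, h2⟩, h3, h4, h5⟩
    rw [BS.getD_append_lt σ x (show p.2 < σ.length by omega),
      BS.getD_append_lt σ x (show p.1 + 1 < σ.length by omega),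
      BS.getD_append_lt σ x (show p.1 < σ.length by omega)]
    exact ⟨⟨by omega, by omega⟩, h3, h4, h5⟩

lemma BS.bac_append_max (σ : List ℕ) (x : ℕ) (hx : ∀ a ∈ σ, a < x) :
    BS.bac (σ ++ [x]) = BS.bac σ + BS.des σ := by
  classical
  unfold BS.bac
  set S : Finset (ℕ × ℕ) :=
    ((Finset.range (σ ++ [x]).length ×ˢ Finset.range (σ ++ [x]).length).filter
      (fun p => p.1 + 2 ≤ p.2 ∧ (σ ++ [x]).getD (p.1 + 1) 0 < (σ ++ [x]).getD p.1 0 ∧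
        (σ ++ [x]).getD p.1 0 < (σ ++ [x]).getD p.2 0)) with hS
  have hsplit : (S.filter (fun p => p.2 ≠ σ.length)).card
      + (S.filter (fun p => ¬ p.2 ≠ σ.length)).card = S.card :=
    Finset.card_filter_add_card_filter_not _
  have h1 : S.filter (fun p => p.2 ≠ σ.length) =
      (Finset.range σ.length ×ˢ Finset.range σ.length).filter
        (fun p => p.1 + 2 ≤ p.2 ∧ σ.getD (p.1 + 1) 0 < σ.getD p.1 0 ∧
          σ.getD p.1 0 < σ.getD p.2 0) := by
    ext p
    simp only [hS, Finset.mem_filter, Finset.mem_product, Finset.mem_range,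
      List.length_append, List.length_singleton]
    constructor
    · rintro ⟨⟨⟨m1, m2⟩, h3, h4, h5⟩, hne⟩
      have hL : p.2 < σ.length := by omega
      rw [BS.getD_append_lt σ x (show p.1 + 1 < σ.length by omega),
        BS.getD_append_lt σ x (show p.1 < σ.length by omega)] at h4
      rw [BS.getD_append_lt σ x (show p.1 < σ.length by omega),
        BS.getD_append_lt σ x hL] at h5
      exact ⟨⟨by omega, hL⟩, h3, h4, h5⟩
    · rintro ⟨⟨m1, m2⟩, h3, h4, h5⟩
      refine ⟨⟨⟨by omega, by omega⟩, h3, ?_, ?_⟩, by omega⟩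
      · rw [BS.getD_append_lt σ x (show p.1 + 1 < σ.length by omega),
          BS.getD_append_lt σ x (show p.1 < σ.length by omega)]
        exact h4
      · rw [BS.getD_append_lt σ x (show p.1 < σ.length by omega),
          BS.getD_append_lt σ x (show p.2 < σ.length by omega)]
        exact h5
  have h2 : S.filter (fun p => ¬ p.2 ≠ σ.length) =
      (BS.desSet σ).image (fun i => (i, σ.length)) := by
    ext p
    obtain ⟨a, b⟩ := p
    simp only [hS, Finset.mem_filter, Finset.mem_product, Finset.mem_range,
      List.length_append, List.length_singleton, Finset.mem_image, not_not,
      BS.desSet, Prod.mk.injEq]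
    constructor
    · rintro ⟨⟨⟨m1, m2⟩, h3, h4, h5⟩, hb⟩
      subst hb
      rw [BS.getD_append_lt σ x (show a + 1 < σ.length by omega),
        BS.getD_append_lt σ x (show a < σ.length by omega)] at h4
      exact ⟨a, ⟨by omega, h4⟩, rfl, rfl⟩
    · rintro ⟨i, ⟨hi, hd⟩, ha, hb⟩
      subst ha; subst hb
      refine ⟨⟨⟨by omega, by omega⟩, by omega, ?_, ?_⟩, rfl⟩
      · rw [BS.getD_append_lt σ x (show i + 1 < σ.length by omega),
          BS.getD_append_lt σ x (show i < σ.length by omega)]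
        exact hd
      · rw [BS.getD_append_lt σ x (show i < σ.length by omega), BS.getD_append_last]
        exact BS.getD_lt_of_forall σ x hx (by omega)
  have hinj : Function.Injective (fun i : ℕ => (i, σ.length)) := by
    intro a b h
    simpa using h
  rw [← hsplit, h1, h2, Finset.card_image_of_injective _ hinj]
  rfl

/-- appending `n` at the end adds des(σ) to stat. -/
theorem stat_append_last (n : ℕ) (σ : List ℕ)
    (hn : 1 ≤ n) (hσ : BS.isPerm σ (n - 1)) :
    BS.stat (σ ++ [n]) = BS.stat σ + BS.des σ := by
  have hx : ∀ a ∈ σ, a < n := by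
    intro a ha
    have := hσ.mem_iff.1 ha
    simp only [List.mem_map, List.mem_range] at this
    obtain ⟨k, hk, rfl⟩ := this
    omega
  unfold BS.stat BS.des
  rw [BS.acb_append_max σ n hx, BS.cba_append_max σ n hx, BS.bac_append_max σ n hx,
    BS.desSet_append_max σ n hx]
  simp only [BS.des]
  omega
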